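/- For λ_1, λ_2 ∈ [λ_*, λ^*] with λ_* > 0, and for x ≥ 1, y ≥ 0, u ∈ (0, y/x), one has |α_{λ_1}(x)β_{λ_1}(y,u) - α_{λ_2}(x)β_{λ_2}(y,u)| ≤ (2e^{-1}/(r λ_*)) (1/(y-u)) (u(x-1)/(y-u))^{λ_*/(2r)} |λ_1 - λ_2|. -/

import Mathlib

private lemma aux_log (t c : ℝ) (ht0 : 0 < t) (hc : 0 < c) :
    (-Real.log t) * t ^ c ≤ 1 / (c * Real.exp 1) := by
  have he : (0:ℝ) < Real.exp 1 := Real.exp_pos 1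
  have h1 : Real.log (t ^ (-c) * (Real.exp 1)⁻¹) ≤ t ^ (-c) * (Real.exp 1)⁻¹ - 1 :=
    Real.log_le_sub_one_of_pos (by positivity)
  rw [Real.log_mul (by positivity) (by positivity), Real.log_rpow ht0,
    Real.log_inv, Real.log_exp] at h1
  have h2 : -c * Real.log t ≤ t ^ (-c) * (Real.exp 1)⁻¹ := by linarith
  have h3 : t ^ (-c) * t ^ c = 1 := by
    rw [← Real.rpow_add ht0]; simp
  have h4 : (-c * Real.log t) * t ^ c ≤ (t ^ (-c) * (Real.exp 1)⁻¹) * t ^ c :=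
    mul_le_mul_of_nonneg_right h2 (by positivity)
  have h5 : (t ^ (-c) * (Real.exp 1)⁻¹) * t ^ c = (Real.exp 1)⁻¹ := by
    rw [mul_comm (t ^ (-c)) _, mul_assoc, h3, mul_one]
  have h6 : (-Real.log t) * t ^ c ≤ (Real.exp 1)⁻¹ / c := by
    rw [le_div_iff₀ hc]
    nlinarith [h4, h5]
  calc (-Real.log t) * t ^ c ≤ (Real.exp 1)⁻¹ / c := h6
    _ = 1 / (c * Real.exp 1) := by field_simp

private lemma aux_diff (t a b : ℝ) (ht0 : 0 < t) (ht1 : t ≤ 1) (hab : b ≤ a) :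
    |t ^ b - t ^ a| ≤ t ^ b * ((-Real.log t) * (a - b)) := by
  have hle : t ^ a ≤ t ^ b := Real.rpow_le_rpow_of_exponent_ge ht0 ht1 hab
  rw [abs_of_nonneg (by linarith)]
  have h1 : t ^ a = t ^ b * t ^ (a - b) := by
    rw [← Real.rpow_add ht0]; ring_nf
  have h2 : 1 + Real.log t * (a - b) ≤ t ^ (a - b) := by
    rw [Real.rpow_def_of_pos ht0]
    linarith [Real.add_one_le_exp (Real.log t * (a - b))]
  have hb : 0 < t ^ b := Real.rpow_pos_of_pos ht0 b
  nlinarith [h1, h2, hb]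

theorem stmt_6 (r lamStar lamSup : ℝ) (hr : 0 < r) (hls : 0 < lamStar) (hle : lamStar ≤ lamSup)
    (lam1 lam2 : ℝ) (h11 : lamStar ≤ lam1) (h12 : lam1 ≤ lamSup)
    (h21 : lamStar ≤ lam2) (h22 : lam2 ≤ lamSup)
    (x y u : ℝ) (hx : 1 ≤ x) (hy : 0 ≤ y) (hu0 : 0 < u) (hu : u < y / x) :
    |((x - 1) ^ (lam1 / r) / r) * (u ^ (lam1 / r) * (y - u) ^ (-(lam1 / r) - 1)) -
      ((x - 1) ^ (lam2 / r) / r) * (u ^ (lam2 / r) * (y - u) ^ (-(lam2 / r) - 1))|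
      ≤ (2 * Real.exp (-1) / (r * lamStar)) * (1 / (y - u)) *
          ((u * (x - 1)) / (y - u)) ^ (lamStar / (2 * r)) * |lam1 - lam2| := by
  have hx0 : (0:ℝ) ≤ x - 1 := by linarith
  have hxpos : (0:ℝ) < x := by linarith
  have huxy : u * x < y := (lt_div_iff₀ hxpos).mp hu
  have hyu : 0 < y - u := by nlinarith
  set t := u * (x - 1) / (y - u) with ht
  have ht0 : 0 ≤ t := by positivity
  have ht1 : t < 1 := by
    rw [ht, div_lt_one hyu]; nlinarith
  have hkey : ∀ a : ℝ, (x - 1) ^ a / r * (u ^ a * (y - u) ^ (-a - 1))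
      = t ^ a * (1 / (r * (y - u))) := by
    intro a
    have hne : (y - u) ^ a ≠ 0 := ne_of_gt (Real.rpow_pos_of_pos hyu a)
    rw [ht, Real.div_rpow (by positivity) hyu.le,
        Real.mul_rpow hu0.le hx0,
        show -a - 1 = -a + -1 by ring, Real.rpow_add hyu,
        Real.rpow_neg hyu.le, Real.rpow_neg_one]
    field_simp
  rw [hkey, hkey, ← sub_mul, abs_mul, abs_of_nonneg (by positivity : (0:ℝ) ≤ 1 / (r * (y - u)))]
  set c := lamStar / (2 * r) with hcdef
  have hc : 0 < c := by positivity
  rcases eq_or_lt_of_le ht0 with h0 | htpos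
  · -- t = 0
    have hl1 : 0 < lam1 := lt_of_lt_of_le hls h11
    have hl2 : 0 < lam2 := lt_of_lt_of_le hls h21
    rw [← h0, Real.zero_rpow (div_pos hl1 hr).ne',
      Real.zero_rpow (div_pos hl2 hr).ne',
      Real.zero_rpow (ne_of_gt hc)]
    simp
  · have hceq : (2:ℝ) * (lamStar / (2 * r)) = lamStar / r := by field_simp
    have h2c1 : 2 * c ≤ lam1 / r := by
      simp only [hcdef]; rw [hceq]; gcongr
    have h2c2 : 2 * c ≤ lam2 / r := by
      simp only [hcdef]; rw [hceq]; gcongr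
    have hlog : (-Real.log t) * t ^ c ≤ 1 / (c * Real.exp 1) := aux_log t c htpos hc
    have hbound : |t ^ (lam1 / r) - t ^ (lam2 / r)| ≤
        t ^ c * (1 / (c * Real.exp 1)) * (|lam1 - lam2| / r) := by
      have hmono : ∀ a : ℝ, 2 * c ≤ a → t ^ a ≤ t ^ (2 * c) := fun a ha =>
        Real.rpow_le_rpow_of_exponent_ge htpos ht1.le ha
      have hsplit : t ^ (2 * c) = t ^ c * t ^ c := by
        rw [← Real.rpow_add htpos]; ring_nf
      have hlogt : 0 ≤ -Real.log t := by
        have := Real.log_nonpos ht0 ht1.le; linarith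
      have main : ∀ a b : ℝ, 2 * c ≤ a → 2 * c ≤ b → b ≤ a →
          |t ^ b - t ^ a| ≤ t ^ c * (1 / (c * Real.exp 1)) * ((a - b)) := by
        intro a b ha hb hba
        calc |t ^ b - t ^ a| ≤ t ^ b * ((-Real.log t) * (a - b)) :=
              aux_diff t a b htpos ht1.le hba
          _ ≤ t ^ (2 * c) * ((-Real.log t) * (a - b)) := by
              exact mul_le_mul_of_nonneg_right (hmono b hb)
                (mul_nonneg hlogt (by linarith))
          _ = t ^ c * ((-Real.log t) * t ^ c) * (a - b) := by rw [hsplit]; ring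
          _ ≤ t ^ c * (1 / (c * Real.exp 1)) * (a - b) := by
              apply mul_le_mul_of_nonneg_right
              · exact mul_le_mul_of_nonneg_left hlog (by positivity)
              · linarith
      have habs : |lam1 / r - lam2 / r| = |lam1 - lam2| / r := by
        rw [div_sub_div_same, abs_div, abs_of_pos hr]
      rcases le_total (lam2 / r) (lam1 / r) with hba | hba
      · have := main _ _ h2c1 h2c2 hba
        rw [abs_sub_comm] at this
        calc |t ^ (lam1 / r) - t ^ (lam2 / r)| ≤
            t ^ c * (1 / (c * Real.exp 1)) * (lam1 / r - lam2 / r) := this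
          _ = t ^ c * (1 / (c * Real.exp 1)) * (|lam1 - lam2| / r) := by
              rw [← habs, abs_of_nonneg (by linarith)]
      · have := main _ _ h2c2 h2c1 hba
        calc |t ^ (lam1 / r) - t ^ (lam2 / r)| ≤
            t ^ c * (1 / (c * Real.exp 1)) * (lam2 / r - lam1 / r) := this
          _ = t ^ c * (1 / (c * Real.exp 1)) * (|lam1 - lam2| / r) := by
              rw [← habs, abs_sub_comm, abs_of_nonneg (by linarith)]
    calc |t ^ (lam1 / r) - t ^ (lam2 / r)| * (1 / (r * (y - u)))
        ≤ (t ^ c * (1 / (c * Real.exp 1)) * (|lam1 - lam2| / r)) * (1 / (r * (y - u))) := by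
          apply mul_le_mul_of_nonneg_right hbound (by positivity)
      _ = (2 * Real.exp (-1) / (r * lamStar)) * (1 / (y - u)) * t ^ c * |lam1 - lam2| := by
          rw [Real.exp_neg, hcdef]
          have he : Real.exp 1 ≠ 0 := (Real.exp_pos 1).ne'
          field_simp
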